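/- Let F̄(n,k) = (6n+1)((1/3)_n)^4 (1/3)_{n+k} (1/3)_{n-k} ((2/3)_k)^4 / ((1)_n^4 (1)_{n-k} (1)_{n+k} ((1/3)_k)^4) and Ḡ(n,k) = 729(2k+1)n^4(n-k)((1/3)_n)^4 (1/3)_{n+k} (1/3)_{n-k} ((2/3)_k)^4 / ((3k+2-3n)(3k+1)^4 (1)_n^4 (1)_{n-k} (1)_{n+k} ((1/3)_k)^4), over Q with the convention 1/(1)_{-j} = 0 for j > 0 and wherever the denominators are nonzero. Then F̄(n,k+1) - F̄(n,k) = Ḡ(n+1,k) - Ḡ(n,k) for all integers n ≥ 0 and 0 ≤ k ≤ n with 3k+2 ≠ 3n and 3k+5 ≠ 3n. -/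

import Mathlib

open Polynomial

/-- Rising Pochhammer symbol over ℚ. -/
noncomputable def poch (x : ℚ) (n : ℕ) : ℚ := (ascPochhammer ℚ n).eval x

/-- Rising Pochhammer symbol with integer index: `(x)_{-k} = 1/(x-k)_k` for `k > 0`;
in particular `(1)_{-k} = 0` for `k > 0`. -/
noncomputable def pochZ (x : ℚ) (m : ℤ) : ℚ :=
  if 0 ≤ m then (ascPochhammer ℚ m.toNat).eval x
  else 1 / (ascPochhammer ℚ (-m).toNat).eval (x + m)

/-- `F̄(n,k)` for Van Hamme (D.2). -/
noncomputable def FbarD2 (n k : ℕ) : ℚ :=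
  (6*n+1) * (poch (1/3) n)^4 * poch (1/3) (n+k) * pochZ (1/3) ((n : ℤ) - k)
      * (poch (2/3) k)^4
    / ((poch 1 n)^4 * pochZ 1 ((n : ℤ) - k) * poch 1 (n+k) * (poch (1/3) k)^4)

/-- `Ḡ(n,k)` for Van Hamme (D.2). -/
noncomputable def GbarD2 (n k : ℕ) : ℚ :=
  729 * (2*k+1) * n^4 * ((n : ℚ) - k) * (poch (1/3) n)^4 * poch (1/3) (n+k)
      * pochZ (1/3) ((n : ℤ) - k) * (poch (2/3) k)^4
    / ((3*(k : ℚ) + 2 - 3*n) * (3*k+1)^4 * (poch 1 n)^4 * pochZ 1 ((n : ℤ) - k)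
      * poch 1 (n+k) * (poch (1/3) k)^4)

lemma poch_succ (x : ℚ) (n : ℕ) : poch x (n+1) = poch x n * (x + n) :=
  ascPochhammer_succ_eval n x

lemma pochZ_coe (x : ℚ) (j : ℕ) : pochZ x (j : ℤ) = poch x j := by
  simp [pochZ, poch]

lemma poch_zero (x : ℚ) : poch x 0 = 1 := by simp [poch]

lemma poch_one (x : ℚ) : poch x 1 = x := by simp [poch, ascPochhammer_one]

lemma pochZ_negone : pochZ 1 (-1) = 0 := by
  norm_num [pochZ, ascPochhammer_one]

set_option maxHeartbeats 1000000 in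
lemma scalar_off (K M : ℚ) (hK : 0 ≤ K) (hM : 0 ≤ M) :
    (6*(K+M+1)+1)*(K+M+1+K+1/3)*(K+2/3)^4/((K+M+1+K+1)*(K+1/3)^4)
      - (6*(K+M+1)+1)*(M+1/3)/(M+1)
    = 729*(2*K+1)*(K+M+1+1)^4*(M+2)*(K+M+1+1/3)^4*(K+M+1+K+1/3)*((M+1/3)*(M+4/3))
        / ((3*K+2-3*(K+M+1+1))*(3*K+1)^4*(K+M+1+1)^4*((M+1)*(M+2))*(K+M+1+K+1))
      - 729*(2*K+1)*(K+M+1)^4*(M+1)*(M+1/3)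
        / ((3*K+2-3*(K+M+1))*(3*K+1)^4*(M+1)) := by
  have h1 : M + 1 ≠ 0 := by positivity
  have h2 : K + M + 1 + K + 1 ≠ 0 := by positivity
  have h3 : K + 1/3 ≠ 0 := by positivity
  have h4 : 3*K + 1 ≠ 0 := by positivity
  have h5 : M + 2 ≠ 0 := by positivity
  have h6 : K + M + 1 + 1 ≠ 0 := by positivity
  have h7 : 3*K+2-3*(K+M+1+1) ≠ 0 := by intro h; nlinarith
  have h8 : 3*K+2-3*(K+M+1) ≠ 0 := by intro h; nlinarith
  have h9 : 3*M+4 ≠ 0 := by positivity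
  have h10 : 3*M+1 ≠ 0 := by positivity
  rw [show 3*K+2-3*(K+M+1+1) = -(3*M+4) by ring, show 3*K+2-3*(K+M+1) = -(3*M+1) by ring]
  field_simp
  ring

lemma scalar_diag (N : ℚ) (hN : 0 ≤ N) :
    -(6*N+1)
    = 729*(2*N+1)*(N+1)^4*(N+1-N)*(N+1/3)^4*((N+N)+1/3)*(1/3)
        / ((3*N+2-3*(N+1))*(3*N+1)^4*(N+1)^4*((N+N)+1)) := by
  have h1 : N + 1 ≠ 0 := by positivity
  have h2 : 3*N + 1 ≠ 0 := by positivity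
  have h3 : N + N + 1 ≠ 0 := by positivity
  have h4 : 3*N+2-3*(N+1) ≠ 0 := by intro h; linarith
  field_simp
  ring

/-- the WZ pair for Van Hamme (D.2):
`F̄(n,k+1) - F̄(n,k) = Ḡ(n+1,k) - Ḡ(n,k)` for `0 ≤ k ≤ n` with `3k+2 ≠ 3n` and
`3k+5 ≠ 3n`. -/
theorem wz_pair_D2 (n k : ℕ) (hk : k ≤ n) (h1 : 3*k + 2 ≠ 3*n) (h2 : 3*k + 5 ≠ 3*n) :
    FbarD2 n (k+1) - FbarD2 n k = GbarD2 (n+1) k - GbarD2 n k := by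
  rcases eq_or_lt_of_le hk with rfl | hlt
  · -- diagonal case k = n
    have hF0 : FbarD2 k (k+1) = 0 := by
      simp only [FbarD2]
      rw [show (k:ℤ) - ((k+1:ℕ):ℤ) = -1 by push_cast; ring, pochZ_negone]
      simp
    have hG0 : GbarD2 k k = 0 := by
      simp [GbarD2]
    have hFn : FbarD2 k k =
        ((poch (1/3) k)^4 * poch (1/3) (k+k) * (poch (2/3) k)^4)
          / ((poch 1 k)^4 * poch 1 (k+k) * (poch (1/3) k)^4)
        * (6*(k:ℚ)+1) := by
      simp only [FbarD2]
      rw [show (k:ℤ) - (k:ℤ) = ((0:ℕ):ℤ) by ring]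
      simp only [pochZ_coe, poch_zero]
      rw [div_mul_eq_mul_div]
      congr 1 <;> push_cast <;> ring
    have hGn : GbarD2 (k+1) k =
        ((poch (1/3) k)^4 * poch (1/3) (k+k) * (poch (2/3) k)^4)
          / ((poch 1 k)^4 * poch 1 (k+k) * (poch (1/3) k)^4)
        * (729*(2*(k:ℚ)+1)*((k:ℚ)+1)^4*((k:ℚ)+1-(k:ℚ))*((k:ℚ)+1/3)^4*(((k:ℚ)+(k:ℚ))+1/3)*(1/3)
            / ((3*(k:ℚ)+2-3*((k:ℚ)+1))*(3*(k:ℚ)+1)^4*((k:ℚ)+1)^4*(((k:ℚ)+(k:ℚ))+1))) := by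
      simp only [GbarD2]
      rw [show ((k+1:ℕ):ℤ) - (k:ℤ) = ((1:ℕ):ℤ) by push_cast; ring]
      simp only [pochZ_coe, poch_one]
      rw [show k+1+k = (k+k)+1 from by omega]
      rw [poch_succ (1/3) (k+k), poch_succ 1 (k+k), poch_succ (1/3) k, poch_succ 1 k]
      rw [div_mul_div_comm]
      congr 1 <;> push_cast <;> ring
    rw [hF0, hG0, zero_sub, sub_zero, hFn, hGn, ← mul_neg]
    congr 1
    exact scalar_diag (k:ℚ) (by positivity)
  · -- off-diagonal case k < n
    obtain ⟨m, rfl⟩ : ∃ m, n = k + m + 1 := ⟨n - k - 1, by omega⟩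
    set K : ℚ := (k:ℚ) with hKdef
    set M : ℚ := (m:ℚ) with hMdef
    have C := ((poch (1/3) (k+m+1))^4 * poch (1/3) (k+m+1+k) * poch (1/3) m
          * (poch (2/3) k)^4)
        / ((poch 1 (k+m+1))^4 * poch 1 m * poch 1 (k+m+1+k) * (poch (1/3) k)^4)
    have hF1 : FbarD2 (k+m+1) (k+1) =
        ((poch (1/3) (k+m+1))^4 * poch (1/3) (k+m+1+k) * poch (1/3) m
            * (poch (2/3) k)^4)
          / ((poch 1 (k+m+1))^4 * poch 1 m * poch 1 (k+m+1+k) * (poch (1/3) k)^4)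
        * ((6*(K+M+1)+1)*(K+M+1+K+1/3)*(K+2/3)^4/((K+M+1+K+1)*(K+1/3)^4)) := by
      simp only [FbarD2]
      rw [show ((k+m+1:ℕ):ℤ) - ((k+1:ℕ):ℤ) = ((m:ℕ):ℤ) by push_cast; ring]
      simp only [pochZ_coe]
      rw [show k+m+1+(k+1) = (k+m+1+k)+1 from by omega]
      rw [poch_succ (1/3) (k+m+1+k), poch_succ 1 (k+m+1+k),
        poch_succ (2/3) k, poch_succ (1/3) k]
      rw [div_mul_div_comm]
      congr 1 <;> push_cast <;> ring
    have hF2 : FbarD2 (k+m+1) k =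
        ((poch (1/3) (k+m+1))^4 * poch (1/3) (k+m+1+k) * poch (1/3) m
            * (poch (2/3) k)^4)
          / ((poch 1 (k+m+1))^4 * poch 1 m * poch 1 (k+m+1+k) * (poch (1/3) k)^4)
        * ((6*(K+M+1)+1)*(M+1/3)/(M+1)) := by
      simp only [FbarD2]
      rw [show ((k+m+1:ℕ):ℤ) - (k:ℤ) = ((m+1:ℕ):ℤ) by push_cast; ring]
      simp only [pochZ_coe]
      rw [poch_succ (1/3) m, poch_succ 1 m]
      rw [div_mul_div_comm]
      congr 1 <;> push_cast <;> ring
    have hG1 : GbarD2 (k+m+1+1) k =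
        ((poch (1/3) (k+m+1))^4 * poch (1/3) (k+m+1+k) * poch (1/3) m
            * (poch (2/3) k)^4)
          / ((poch 1 (k+m+1))^4 * poch 1 m * poch 1 (k+m+1+k) * (poch (1/3) k)^4)
        * (729*(2*K+1)*(K+M+1+1)^4*(M+2)*(K+M+1+1/3)^4*(K+M+1+K+1/3)*((M+1/3)*(M+4/3))
            / ((3*K+2-3*(K+M+1+1))*(3*K+1)^4*(K+M+1+1)^4*((M+1)*(M+2))*(K+M+1+K+1))) := by
      simp only [GbarD2]
      rw [show ((k+m+1+1:ℕ):ℤ) - (k:ℤ) = ((m+1+1:ℕ):ℤ) by push_cast; ring]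
      simp only [pochZ_coe]
      rw [show k+m+1+1+k = (k+m+1+k)+1 from by omega]
      rw [poch_succ (1/3) (k+m+1+k), poch_succ 1 (k+m+1+k),
        poch_succ (1/3) (k+m+1), poch_succ 1 (k+m+1),
        poch_succ (1/3) (m+1), poch_succ 1 (m+1),
        poch_succ (1/3) m, poch_succ 1 m]
      rw [div_mul_div_comm]
      congr 1 <;> push_cast <;> ring
    have hG2 : GbarD2 (k+m+1) k =
        ((poch (1/3) (k+m+1))^4 * poch (1/3) (k+m+1+k) * poch (1/3) m
            * (poch (2/3) k)^4)
          / ((poch 1 (k+m+1))^4 * poch 1 m * poch 1 (k+m+1+k) * (poch (1/3) k)^4)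
        * (729*(2*K+1)*(K+M+1)^4*(M+1)*(M+1/3)
            / ((3*K+2-3*(K+M+1))*(3*K+1)^4*(M+1))) := by
      simp only [GbarD2]
      rw [show ((k+m+1:ℕ):ℤ) - (k:ℤ) = ((m+1:ℕ):ℤ) by push_cast; ring]
      simp only [pochZ_coe]
      rw [poch_succ (1/3) m, poch_succ 1 m]
      rw [div_mul_div_comm]
      congr 1 <;> push_cast <;> ring
    rw [hF1, hF2, hG1, hG2, ← mul_sub, ← mul_sub]
    congr 1
    exact scalar_off K M (by positivity) (by positivity)
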